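/- The constant 3√3/2 in the Lipschitz estimate |B_f(z₁) - B_f(z₂)| ≤ (3√3/2)‖f‖_s ρ(z₁,z₂) for harmonic Bloch mappings is sharp: for every ε ∈ (0, 3√3/2] there exist an analytic function f on 𝔻 with Bloch semi-norm ‖f‖_s = 1 and points z₁, z₂ ∈ 𝔻 such that |B_f(z₂) - B_f(z₁)| ≥ (3√3/2 - ε)·ρ(z₁,z₂). -/

import Mathlib

set_option maxHeartbeats 1000000 in
theorem statement9 :
    ∀ ε : ℝ, 0 < ε → ε ≤ 3 * Real.sqrt 3 / 2 →
    ∃ f : ℂ → ℂ, DifferentiableOn ℂ f (Metric.ball 0 1) ∧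
      IsLUB {y : ℝ | ∃ z ∈ Metric.ball (0 : ℂ) 1,
        y = (1 - ‖z‖ ^ 2) * ‖deriv f z‖} 1 ∧
      ∃ z₁ ∈ Metric.ball (0 : ℂ) 1, ∃ z₂ ∈ Metric.ball (0 : ℂ) 1, z₁ ≠ z₂ ∧
        |(1 - ‖z₂‖ ^ 2) * ‖deriv f z₂‖ -
          (1 - ‖z₁‖ ^ 2) * ‖deriv f z₁‖| ≥
          (3 * Real.sqrt 3 / 2 - ε) *
            ‖(z₁ - z₂) / (1 - (starRingEnd ℂ) z₂ * z₁)‖ := by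
  intro ε hε hεK
  set s : ℝ := Real.sqrt 3 with hs
  have hs3sq : s ^ 2 = 3 := Real.sq_sqrt (by norm_num)
  have hs3 : (0:ℝ) < s := Real.sqrt_pos.mpr (by norm_num)
  set K : ℝ := 3 * s / 2 with hK
  have hKpos : 0 < K := by positivity
  set a : ℝ := min (1/2) (ε / K^2) with ha
  have hapos : 0 < a := lt_min (by norm_num) (by positivity)
  have hale : a ≤ 1/2 := min_le_left _ _
  have haK : a ≤ ε / K^2 := min_le_right _ _
  have haK' : a * K^2 ≤ ε := (le_div_iff₀ (by positivity)).mp haK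
  set r₀ : ℝ := (Real.sqrt (a^2+3) - a)/3 with hr0
  have hsq : Real.sqrt (a^2+3) ^ 2 = a^2 + 3 := Real.sq_sqrt (by positivity)
  have hsnn : 0 ≤ Real.sqrt (a^2+3) := Real.sqrt_nonneg _
  have hsle : Real.sqrt (a^2+3) ≤ 2 := by nlinarith
  have hsgt : a < Real.sqrt (a^2+3) := by nlinarith
  have hr0pos : 0 < r₀ := by rw [hr0]; linarith
  have hr0lt : r₀ < 1 := by rw [hr0]; nlinarith
  have hcrit : 3 * r₀^2 + 2*a*r₀ = 1 := by
    rw [hr0]; field_simp; nlinarith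
  set M : ℝ := (1 - r₀^2) * (a + r₀) with hM
  have hMpos : 0 < M := by nlinarith
  set c : ℝ := 1 / M with hc
  have hcpos : 0 < c := by positivity
  have hcM : c * M = 1 := by rw [hc]; field_simp
  -- the max of (1-r²)(a+r) over [0,1] is M
  have hmax : ∀ r : ℝ, 0 ≤ r → (1 - r^2) * (a + r) ≤ M := by
    intro r hr
    have h1 : 0 ≤ (r - r₀)^2 * (r + 2*r₀ + a) :=
      mul_nonneg (sq_nonneg _) (by linarith)
    have key : M - (1 - r^2) * (a + r) = (r - r₀)^2 * (r + 2*r₀ + a) := by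
      rw [hM]; linear_combination (r - r₀) * hcrit
    linarith
  -- M is small: M ≤ 1/K + a
  have hMle : M ≤ 1/K + a := by
    have h1 : r₀ - r₀^3 ≤ 2*s/9 := by
      have h2 : 0 ≤ (r₀ - s/3)^2 * (r₀ + 2*s/3) :=
        mul_nonneg (sq_nonneg _) (by positivity)
      have key : (r₀ - s/3)^2 * (r₀ + 2*s/3) = r₀^3 - r₀ + 2*s/9 := by
        linear_combination (2*s/27 - r₀/3) * hs3sq
      linarith
    have h2 : 1/K = 2*s/9 := by
      rw [hK, div_eq_div_iff (by positivity) (by norm_num)]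
      linear_combination (-3)*hs3sq
    rw [hM, h2]
    have e : (1 - r₀^2) * (a + r₀) = a + (r₀ - r₀^3) - a*r₀^2 := by ring
    have hnn : 0 ≤ a * r₀^2 := mul_nonneg hapos.le (sq_nonneg r₀)
    linarith
  have hKεM : (K - ε) * M ≤ 1 := by
    have h0 : 0 ≤ K - ε := by linarith
    have h1 : (K - ε) * M ≤ (K - ε) * (1/K + a) :=
      mul_le_mul_of_nonneg_left hMle h0
    have h2 : (K - ε) * (1/K + a) ≤ 1 := by
      have hKK : K * (1/K) = 1 := by
        rw [mul_one_div, div_self hKpos.ne']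
      have hKa : K * a ≤ ε / K := by
        rw [le_div_iff₀ hKpos]
        calc K * a * K = a * K^2 := by ring
          _ ≤ ε := haK'
      have hεa : 0 ≤ ε * a := mul_nonneg hε.le hapos.le
      have expand : (K - ε)*(1/K + a) = K*(1/K) + K*a - ε/K - ε*a := by ring
      rw [expand, hKK]
      linarith
    linarith
  have hcKε : K - ε ≤ c := by
    rw [hc, le_div_iff₀ hMpos]; exact hKεM
  clear_value c M r₀ a K s
  -- the function and its derivative
  have hder : ∀ z : ℂ,
      HasDerivAt (fun z : ℂ => (c:ℂ) * ((a:ℂ) * z - z^2/2)) ((c:ℂ)*((a:ℂ) - z)) z := by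
    intro z
    have h1 : HasDerivAt (fun z : ℂ => (a:ℂ) * z - z^2/2) ((a:ℂ) - z) z := by
      have h2 : HasDerivAt (fun z : ℂ => (a:ℂ) * z - z^2/2) _ z := ((hasDerivAt_id z).const_mul (a:ℂ)).sub ((hasDerivAt_pow 2 z).div_const 2)
      convert h2 using 1
      simp
    exact h1.const_mul _
  have hderiv : ∀ z : ℂ, deriv (fun z : ℂ => (c:ℂ) * ((a:ℂ) * z - z^2/2)) z
      = (c:ℂ)*((a:ℂ) - z) := fun z => (hder z).deriv
  have habsder : ∀ z : ℂ, ‖deriv (fun z : ℂ => (c:ℂ) * ((a:ℂ) * z - z^2/2)) z‖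
      = c * ‖(a:ℂ) - z‖ := by
    intro z
    rw [hderiv, norm_mul, Complex.norm_real, Real.norm_eq_abs, abs_of_pos hcpos]
  refine ⟨fun z => (c:ℂ) * ((a:ℂ) * z - z^2/2), ?_, ?_, ?_⟩
  · exact fun z _ => ((hder z).differentiableAt).differentiableWithinAt
  · constructor
    · -- upper bound
      rintro y ⟨z, hz, rfl⟩
      rw [habsder]
      rw [Metric.mem_ball, dist_zero_right] at hz
      set r : ℝ := ‖z‖ with hr
      have hzn : r < 1 := hz
      have hrnn : 0 ≤ r := norm_nonneg z
      have habs : ‖(a:ℂ) - z‖ ≤ a + r := by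
        have h := norm_sub_le ((a:ℂ)) z
        rw [Complex.norm_real, Real.norm_eq_abs, abs_of_pos hapos, ← hr] at h
        exact h
      have h1 : (1 - r^2) * (c * ‖(a:ℂ) - z‖) ≤ (1 - r^2) * (c * (a + r)) := by
        apply mul_le_mul_of_nonneg_left _ (by nlinarith)
        exact mul_le_mul_of_nonneg_left habs hcpos.le
      have h2 : (1 - r^2) * (c * (a + r)) ≤ 1 := by
        have h3 := hmax r hrnn
        calc (1 - r^2) * (c * (a + r)) = c * ((1 - r^2) * (a + r)) := by ring
          _ ≤ c * M := mul_le_mul_of_nonneg_left h3 hcpos.le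
          _ = 1 := hcM
      linarith
    · -- least: 1 is attained at z = -r₀
      intro b hb
      apply hb
      refine ⟨((-r₀ : ℝ) : ℂ), ?_, ?_⟩
      · rw [Metric.mem_ball, dist_zero_right]
        simp only [Complex.norm_real, Real.norm_eq_abs, abs_neg, abs_of_pos hr0pos]
        exact hr0lt
      · rw [habsder]
        have h1 : ‖((-r₀ : ℝ) : ℂ)‖ = r₀ := by
          rw [Complex.norm_real, Real.norm_eq_abs, abs_neg, abs_of_pos hr0pos]
        have h2 : ((a:ℂ) - ((-r₀ : ℝ) : ℂ)) = ((a + r₀ : ℝ) : ℂ) := by push_cast; ring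
        rw [h1, h2, Complex.norm_real, Real.norm_eq_abs, abs_of_pos (by linarith : (0:ℝ) < a + r₀)]
        have h3 : (1 - r₀^2) * (c * (a + r₀)) = c * M := by rw [hM]; ring
        rw [h3, hcM]
  · -- the two points 0 and a
    refine ⟨0, by simp, (a:ℂ), ?_, ?_, ?_⟩
    · rw [Metric.mem_ball, dist_zero_right]
      simp only [Complex.norm_real, Real.norm_eq_abs, abs_of_pos hapos]
      linarith
    · intro h
      have h0 : (0:ℝ) = a := by exact_mod_cast h
      linarith
    · rw [habsder, habsder]
      have h1 : ((a:ℂ) - (a:ℂ)) = 0 := by ring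
      have h2 : ((a:ℂ) - 0) = ((a:ℝ):ℂ) := by ring
      rw [h1, h2, norm_zero, Complex.norm_real, Real.norm_eq_abs, abs_of_pos hapos]
      have h3 : ‖(0 - (a:ℂ)) / (1 - (starRingEnd ℂ) (a:ℂ) * 0)‖ = a := by
        simp [abs_of_pos hapos]
      rw [h3]
      have h4 : |(1 - a ^ 2) * (c * 0) - (1 - 0 ^ 2) * (c * a)| = c * a := by
        rw [mul_zero, mul_zero, zero_sub, abs_neg]
        have h5 : (1 - (0:ℝ) ^ 2) * (c * a) = c * a := by ring
        rw [h5, abs_of_pos (mul_pos hcpos hapos)]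
      rw [ge_iff_le]
      calc (K - ε) * a ≤ c * a := mul_le_mul_of_nonneg_right hcKε hapos.le
        _ = |(1 - a ^ 2) * (c * 0) - (1 - 0 ^ 2) * (c * a)| := h4.symm
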